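/- For H ∈ M₂(ℂ) the following are equivalent: (i) there exists an invertible Hermitian G ∈ M₂(ℂ) such that H†·G = G·H (H is G-pseudo-Hermitian for some G); (ii) the characteristic polynomial of H has real coefficients, equivalently Tr(H) ∈ ℝ and det(H) ∈ ℝ (H is PT-symmetric). -/

import Mathlib

open Matrix Complex

noncomputable section

/-- `H ∈ M₂(ℂ)` is PT-symmetric: its characteristic polynomial has real coefficients,
equivalently `Tr(H) ∈ ℝ` and `det(H) ∈ ℝ`. -/
def PTSymmetric (H : Matrix (Fin 2) (Fin 2) ℂ) : Prop :=
  H.trace.im = 0 ∧ H.det.im = 0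

/-- `H` is `G`-pseudo-Hermitian for some invertible Hermitian `G`
iff `H` is PT-symmetric. -/
theorem stmt_6 (H : Matrix (Fin 2) (Fin 2) ℂ) :
    (∃ G : Matrix (Fin 2) (Fin 2) ℂ, G.IsHermitian ∧ IsUnit G.det ∧ Hᴴ * G = G * H) ↔
    PTSymmetric H := by
  constructor
  · intro h
    obtain ⟨G, hG, hdet, hcomm⟩ := h
    have hH : Hᴴ = G * H * G⁻¹ := by
      rw [← hcomm, Matrix.mul_assoc, Matrix.mul_nonsing_inv _ hdet, Matrix.mul_one]
    have hGdet : G.det ≠ 0 := hdet.ne_zero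
    constructor
    · have h1 : Hᴴ.trace = H.trace := by
        rw [hH, Matrix.trace_mul_cycle, Matrix.nonsing_inv_mul _ hdet,
          Matrix.one_mul]
      rw [Matrix.trace_conjTranspose] at h1
      have := Complex.conj_eq_iff_im.mp (by simpa using h1)
      exact this
    · have h1 : Hᴴ.det = H.det := by
        rw [hH, Matrix.det_mul, Matrix.det_mul, Matrix.det_nonsing_inv]
        rw [Ring.inverse_eq_inv']
        field_simp
      rw [Matrix.det_conjTranspose] at h1
      exact Complex.conj_eq_iff_im.mp (by simpa using h1)
  · rintro ⟨hT, hD⟩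
    have h1 : (starRingEnd ℂ) (H 0 0) + (starRingEnd ℂ) (H 1 1) = H 0 0 + H 1 1 := by
      have := Complex.conj_eq_iff_im.mpr hT
      simpa [Matrix.trace_fin_two, map_add] using this
    have h2 : (starRingEnd ℂ) (H 0 0) * (starRingEnd ℂ) (H 1 1)
        - (starRingEnd ℂ) (H 0 1) * (starRingEnd ℂ) (H 1 0)
        = H 0 0 * H 1 1 - H 0 1 * H 1 0 := by
      have := Complex.conj_eq_iff_im.mpr hD
      simpa [Matrix.det_fin_two, map_sub, _root_.map_mul] using this
    by_cases hz : (H 0 0 - H 1 1) + (starRingEnd ℂ) (H 0 0 - H 1 1) = 0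
        ∧ H 0 1 + (starRingEnd ℂ) (H 1 0) = 0
    · -- anti-Hermitian-like case
      obtain ⟨hz1, hz2⟩ := hz
      have hz1' : H 0 0 - H 1 1 + ((starRingEnd ℂ) (H 0 0) - (starRingEnd ℂ) (H 1 1)) = 0 := by
        simpa [map_sub] using hz1
      have hA : (starRingEnd ℂ) (H 0 0) = H 1 1 := by linear_combination (hz1' + h1) / 2
      have hD2 : (starRingEnd ℂ) (H 1 1) = H 0 0 := by linear_combination (h1 - hz1') / 2
      have hC : (starRingEnd ℂ) (H 1 0) = -(H 0 1) := by linear_combination hz2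
      have hc : H 1 0 = -(starRingEnd ℂ) (H 0 1) := by
        have := congrArg (starRingEnd ℂ) hC
        simpa using this
      by_cases hb : H 0 1 = 0
      · have hc0 : H 1 0 = 0 := by simp [hc, hb]
        refine ⟨!![0, 1; 1, 0], ?_, ?_, ?_⟩
        · ext i j
          fin_cases i <;> fin_cases j <;> simp [Matrix.conjTranspose_apply]
        · rw [Matrix.det_fin_two_of]
          simp
        · ext i j
          fin_cases i <;> fin_cases j <;>
            simp [Matrix.mul_apply, Fin.sum_univ_two, Matrix.conjTranspose_apply, hb, hc0, hA, hD2]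
      · have ecd : (starRingEnd ℂ) (H 0 0 - H 1 1) = -(H 0 0 - H 1 1) := by
          rw [map_sub, hA, hD2]; ring
        refine ⟨!![2 * (H 0 1 * (starRingEnd ℂ) (H 0 1)), (H 0 0 - H 1 1) * H 0 1;
          (starRingEnd ℂ) ((H 0 0 - H 1 1) * H 0 1), -(2 * (H 0 1 * (starRingEnd ℂ) (H 0 1)))],
          ?_, ?_, ?_⟩
        · ext i j
          fin_cases i <;> fin_cases j <;>
            simp only [Matrix.conjTranspose_apply, Fin.mk_zero, Fin.mk_one, Fin.isValue, Matrix.cons_val', Matrix.cons_val_zero, Matrix.cons_val_one, Matrix.head_cons, Matrix.head_fin_const, Matrix.empty_val', Matrix.cons_val_fin_one, Matrix.of_apply, star_def, _root_.map_mul, map_add, map_sub, map_neg, map_ofNat, Complex.conj_conj] <;> ring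
        · rw [isUnit_iff_ne_zero, Matrix.det_fin_two_of]
          have hval : 2 * (H 0 1 * (starRingEnd ℂ) (H 0 1)) *
                -(2 * (H 0 1 * (starRingEnd ℂ) (H 0 1))) -
                (H 0 0 - H 1 1) * H 0 1 * (starRingEnd ℂ) ((H 0 0 - H 1 1) * H 0 1)
              = ((-(4 * normSq (H 0 1) ^ 2) - normSq (H 0 0 - H 1 1) * normSq (H 0 1) : ℝ) : ℂ) := by
            push_cast [Complex.normSq_eq_conj_mul_self]
            simp only [_root_.map_mul, ecd]
            ring
          rw [hval]
          have hpos : 0 < normSq (H 0 1) := Complex.normSq_pos.mpr hb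
          have hnn : 0 ≤ normSq (H 0 0 - H 1 1) := Complex.normSq_nonneg _
          intro h
          have : (-(4 * normSq (H 0 1) ^ 2) - normSq (H 0 0 - H 1 1) * normSq (H 0 1) : ℝ) = 0 := by
            exact_mod_cast h
          nlinarith
        · ext i j
          fin_cases i <;> fin_cases j <;>
            simp only [Matrix.mul_apply, Fin.sum_univ_two, Matrix.conjTranspose_apply,
              Fin.mk_zero, Fin.mk_one, Fin.isValue, Matrix.cons_val', Matrix.cons_val_zero,
              Matrix.cons_val_one, Matrix.head_cons, Matrix.head_fin_const, Matrix.empty_val',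
              Matrix.cons_val_fin_one, Matrix.of_apply, star_def, _root_.map_mul, map_sub, map_neg, map_ofNat,
              Complex.conj_conj, hc, hA, hD2] <;> ring
    · -- generic case : G = 2 (K + Kᴴ)
      push_neg at hz
      refine ⟨!![(H 0 0 - H 1 1) + (starRingEnd ℂ) (H 0 0 - H 1 1),
          2 * (H 0 1 + (starRingEnd ℂ) (H 1 0));
          (starRingEnd ℂ) (2 * (H 0 1 + (starRingEnd ℂ) (H 1 0))),
          -((H 0 0 - H 1 1) + (starRingEnd ℂ) (H 0 0 - H 1 1))], ?_, ?_, ?_⟩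
      · ext i j
        fin_cases i <;> fin_cases j <;>
          simp only [Matrix.conjTranspose_apply, Fin.mk_zero, Fin.mk_one, Fin.isValue, Matrix.cons_val', Matrix.cons_val_zero, Matrix.cons_val_one, Matrix.head_cons, Matrix.head_fin_const, Matrix.empty_val', Matrix.cons_val_fin_one, Matrix.of_apply, star_def, _root_.map_mul, map_add, map_sub, map_neg, map_ofNat, Complex.conj_conj] <;> ring
      · rw [isUnit_iff_ne_zero, Matrix.det_fin_two_of]
        have hg0 : (H 0 0 - H 1 1) + (starRingEnd ℂ) (H 0 0 - H 1 1)
            = ((2 * (H 0 0 - H 1 1).re : ℝ) : ℂ) := Complex.add_conj _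
        have hval : ((H 0 0 - H 1 1) + (starRingEnd ℂ) (H 0 0 - H 1 1)) *
              -((H 0 0 - H 1 1) + (starRingEnd ℂ) (H 0 0 - H 1 1)) -
              2 * (H 0 1 + (starRingEnd ℂ) (H 1 0)) *
                (starRingEnd ℂ) (2 * (H 0 1 + (starRingEnd ℂ) (H 1 0)))
            = ((-(2 * (H 0 0 - H 1 1).re) ^ 2
                - normSq (2 * (H 0 1 + (starRingEnd ℂ) (H 1 0))) : ℝ) : ℂ) := by
          rw [hg0, Complex.mul_conj]
          push_cast
          ring
        rw [hval]
        intro h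
        have h' : (-(2 * (H 0 0 - H 1 1).re) ^ 2
            - normSq (2 * (H 0 1 + (starRingEnd ℂ) (H 1 0))) : ℝ) = 0 := by exact_mod_cast h
        have hre : (H 0 0 - H 1 1).re = 0 := by
          nlinarith [Complex.normSq_nonneg (2 * (H 0 1 + (starRingEnd ℂ) (H 1 0)))]
        have hw0 : (2 : ℂ) * (H 0 1 + (starRingEnd ℂ) (H 1 0)) = 0 := by
          apply Complex.normSq_eq_zero.mp
          nlinarith [sq_nonneg (2 * (H 0 0 - H 1 1).re)]
        have hb0 : H 0 1 + (starRingEnd ℂ) (H 1 0) = 0 := by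
          have := mul_eq_zero.mp hw0
          simpa using this
        apply hz ?_ hb0
        rw [hg0, hre]
        norm_num
      · ext i j
        fin_cases i <;> fin_cases j <;>
          simp only [Matrix.mul_apply, Fin.sum_univ_two, Matrix.conjTranspose_apply,
            Fin.mk_zero, Fin.mk_one, Fin.isValue, Matrix.cons_val', Matrix.cons_val_zero,
            Matrix.cons_val_one, Matrix.head_cons, Matrix.head_fin_const, Matrix.empty_val',
            Matrix.cons_val_fin_one, Matrix.of_apply, star_def, _root_.map_mul, map_add, map_sub, map_neg,
            map_ofNat, Complex.conj_conj]
        · linear_combination (H 0 0 + (starRingEnd ℂ) (H 0 0)) * h1 - 2 * h2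
        · linear_combination (H 0 1 + (starRingEnd ℂ) (H 1 0)) * h1
        · linear_combination (H 1 0 + (starRingEnd ℂ) (H 0 1)) * h1
        · linear_combination (H 1 1 + (starRingEnd ℂ) (H 1 1)) * h1 - 2 * h2
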